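/- Let P be a submonoid of a group G. For finite words α = (p₁,…,p_{2k}) in P, define the iterated quotient set Q(α) = {e, p_{2k}⁻¹p_{2k-1}, p_{2k}⁻¹p_{2k-1}p_{2k-2}⁻¹p_{2k-3}, …} ⊆ G and the constructible set K(α) = ⋂_{g ∈ Q(α)} (gP ∩ P) ⊆ P. Then for the reversed word α̃ = (p_{2k}, p_{2k-1}, …, p₂, p₁) one has K(α̃) = K(α), provided α is neutral (i.e. p₁⁻¹p₂⋯p_{2k-1}⁻¹p_{2k} = e in G). -/
import Mathlib


/-- The alternating product `p₁⁻¹p₂⋯p_{2k-1}⁻¹p_{2k}` of a word, given as a list of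
pairs `[(p₁,p₂),…,(p_{2k-1},p_{2k})]`. -/
def wordProd {G : Type*} [Group G] (w : List (G × G)) : G :=
  (w.map fun x => x.1⁻¹ * x.2).prod

/-- The iterated quotient set `Q(α) = {e, p_{2k}⁻¹p_{2k-1}, p_{2k}⁻¹p_{2k-1}p_{2k-2}⁻¹p_{2k-3}, …}`. -/
def quotSet {G : Type*} [Group G] (w : List (G × G)) : Set G :=
  Set.range fun j : ℕ => ((w.reverse.take j).map fun x => x.2⁻¹ * x.1).prod

/-- The constructible set `K(α) = ⋂_{g ∈ Q(α)} (gP ∩ P)`, as a subset of `G`. -/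
def KSet {G : Type*} [Group G] (P : Submonoid G) (w : List (G × G)) : Set G :=
  {x : G | x ∈ P ∧ ∀ g ∈ quotSet w, ∃ p ∈ P, x = g * p}


section Aux
variable {G : Type*} [Group G]

lemma wp_take_drop (w : List (G × G)) (m : ℕ) :
    wordProd (w.take m) * wordProd (w.drop m) = wordProd w := by
  simp [wordProd, ← List.prod_append, ← List.map_append]

lemma qrev (w : List (G × G)) (j : ℕ) :
    (((w.reverse.map Prod.swap).reverse.take j).map fun x : G × G => x.2⁻¹ * x.1).prod
      = wordProd (w.take j) := by
  simp [wordProd, List.map_take, List.map_map, Function.comp_def]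

lemma qfwd (w : List (G × G)) (j : ℕ) :
    ((w.reverse.take j).map fun x : G × G => x.2⁻¹ * x.1).prod
      = (wordProd (w.drop (w.length - j)))⁻¹ := by
  rw [List.take_reverse, List.map_reverse, List.prod_reverse_noncomm]
  simp [wordProd, List.map_map, Function.comp_def, mul_inv_rev]

theorem quot_eq (w : List (G × G)) (hneutral : wordProd w = 1) :
    quotSet (w.reverse.map Prod.swap) = quotSet w := by
  have key : ∀ m, wordProd (w.take m) = (wordProd (w.drop m))⁻¹ := by
    intro m
    rw [eq_inv_iff_mul_eq_one, wp_take_drop, hneutral]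
  ext x
  constructor
  · rintro ⟨j, rfl⟩
    refine ⟨w.length - j, ?_⟩
    beta_reduce
    rw [qfwd, qrev]
    rcases le_or_gt j w.length with h | h
    · rw [Nat.sub_sub_self h, key]
    · rw [Nat.sub_eq_zero_of_le h.le, Nat.sub_zero, List.drop_length,
        List.take_of_length_le h.le]
      rw [hneutral]; simp [wordProd]
  · rintro ⟨j, rfl⟩
    refine ⟨w.length - j, ?_⟩
    beta_reduce
    rw [qrev, qfwd, key]

end Aux

theorem stmt_6 {G : Type*} [Group G] (P : Submonoid G) (w : List (G × G))
    (hw : ∀ x ∈ w, x.1 ∈ P ∧ x.2 ∈ P) (hneutral : wordProd w = 1) :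
    KSet P (w.reverse.map Prod.swap) = KSet P w := by
  unfold KSet
  rw [quot_eq w hneutral]
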